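/- For α > 0 and integers n ≥ 0, 0 ≤ l ≤ m with m + l ≤ 2^n, the midpoint defect satisfies 2^{(n-1)α}·[f_α(m/2^n) − (1/2)(f_α((m−l)/2^n) + f_α((m+l)/2^n))] = S_{α−1}(m+l) + S_{α−1}(m−l) − 2 S_{α−1}(m). -/

import Mathlib

/-- The tent map `φ(x) = 2 inf{|x-n| : n ∈ ℤ}`. -/

noncomputable def tent (x : ℝ) : ℝ := 2 * ⨅ n : ℤ, |x - (n:ℝ)|

lemma tent_nonneg (x : ℝ) : 0 ≤ tent x := by
  unfold tent
  have : (0:ℝ) ≤ ⨅ n : ℤ, |x - (n:ℝ)| :=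
    le_ciInf fun n => abs_nonneg _
  linarith

lemma tent_bdd (x : ℝ) : BddBelow (Set.range fun n : ℤ => |x - (n:ℝ)|) :=
  ⟨0, by rintro y ⟨n, rfl⟩; exact abs_nonneg _⟩

lemma tent_int (k : ℤ) : tent (k : ℝ) = 0 := by
  unfold tent
  have h1 : (⨅ n : ℤ, |(k:ℝ) - (n:ℝ)|) ≤ 0 := by
    have := ciInf_le (tent_bdd (k:ℝ)) k
    simpa using this
  have h2 : (0:ℝ) ≤ ⨅ n : ℤ, |(k:ℝ) - (n:ℝ)| := le_ciInf fun n => abs_nonneg _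
  have : (⨅ n : ℤ, |(k:ℝ) - (n:ℝ)|) = 0 := le_antisymm h1 h2
  rw [this]; ring

lemma tent_left {x : ℝ} (h0 : 0 ≤ x) (h1 : x ≤ 1/2) : tent x = 2 * x := by
  unfold tent
  congr 1
  apply le_antisymm
  · have := ciInf_le (tent_bdd x) 0
    simpa [abs_of_nonneg h0] using this
  · apply le_ciInf
    intro n
    rcases le_or_gt n 0 with hn | hn
    · have : (n:ℝ) ≤ 0 := by exact_mod_cast hn
      rw [abs_of_nonneg (by linarith)]; linarith
    · have : (1:ℝ) ≤ n := by exact_mod_cast hn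
      rw [abs_of_nonpos (by linarith)]; linarith

lemma tent_right {x : ℝ} (h0 : 1/2 ≤ x) (h1 : x ≤ 1) : tent x = 2 * (1 - x) := by
  unfold tent
  congr 1
  apply le_antisymm
  · have := ciInf_le (tent_bdd x) 1
    rw [abs_of_nonpos (by push_cast; linarith)] at this
    simpa using this
  · apply le_ciInf
    intro n
    rcases le_or_gt n 0 with hn | hn
    · have : (n:ℝ) ≤ 0 := by exact_mod_cast hn
      rw [abs_of_nonneg (by linarith)]; linarith
    · have : (1:ℝ) ≤ n := by exact_mod_cast hn
      rcases le_or_gt (n:ℤ) 1 with hn2 | hn2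
      · have : (n:ℝ) ≤ 1 := by exact_mod_cast hn2
        have h1n : (n:ℝ) = 1 := by linarith
        rw [h1n, abs_of_nonpos (by linarith)]; linarith
      · have : (2:ℝ) ≤ n := by exact_mod_cast hn2
        rw [abs_of_nonpos (by linarith)]; linarith

lemma tent_add_int (x : ℝ) (k : ℤ) : tent (x + k) = tent x := by
  unfold tent
  congr 1
  have : (Set.range fun n : ℤ => |x + (k:ℝ) - (n:ℝ)|) = Set.range fun n : ℤ => |x - (n:ℝ)| := by
    ext y
    constructor
    · rintro ⟨n, rfl⟩; exact ⟨n - k, by push_cast; ring_nf⟩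
    · rintro ⟨n, rfl⟩; exact ⟨n + k, by push_cast; ring_nf⟩
  rw [iInf, iInf, this]

/-- `f_α(x) = ∑_{j=0}^∞ 2^{-αj} φ(2^j x)`. -/
noncomputable def takagi (α x : ℝ) : ℝ :=
  ∑' j : ℕ, (1 / (2:ℝ) ^ (α * (j:ℝ))) * tent ((2:ℝ) ^ (j:ℕ) * x)


/-- Weighted binary digit sum: `s_p(n) = ∑_j 2^{pj} ε_j(n)`. -/
noncomputable def sWeight (p : ℝ) (n : ℕ) : ℝ :=
  ∑ j ∈ Finset.range n, if n.testBit j then (2:ℝ) ^ (p * (j:ℝ)) else 0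

/-- `S_p(n) = ∑_{m=0}^{n-1} s_p(m)`. -/
noncomputable def SWeight (p : ℝ) (n : ℕ) : ℝ :=
  ∑ m ∈ Finset.range n, sWeight p m

lemma tent_diff (k m : ℕ) :
    tent (((m:ℝ)+1) / 2^(k+1)) - tent ((m:ℝ)/2^(k+1)) =
      (2/2^(k+1)) * (1 - 2 * (if m.testBit k then 1 else 0)) := by
  set K : ℕ := 2^(k+1) with hK
  obtain ⟨q, r, hr, rfl⟩ : ∃ q r, r < K ∧ m = q * K + r :=
    ⟨m / K, m % K, Nat.mod_lt _ (by rw [hK]; positivity), (Nat.div_add_mod' m K).symm⟩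
  have hKR : (0:ℝ) < (K:ℝ) := by positivity
  have e1 : ((q * K + r : ℕ) : ℝ) / 2^(k+1) = (r:ℝ)/(K:ℝ) + (q:ℤ) := by
    push_cast [hK]
    field_simp
    ring
  have e2 : (((q * K + r : ℕ) : ℝ) + 1) / 2^(k+1) = ((r:ℝ)+1)/(K:ℝ) + (q:ℤ) := by
    push_cast [hK]
    field_simp
    ring
  have htb : (q * K + r).testBit k = r.testBit k := by
    have hmod : (q * K + r) % 2 ^ (k+1) = r := by
      rw [← hK, add_comm, Nat.add_mul_mod_self_right, Nat.mod_eq_of_lt hr]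
    conv_rhs => rw [← hmod]
    rw [Nat.testBit_mod_two_pow]
    simp
  rw [e1, e2, tent_add_int, tent_add_int, htb]
  have hKpow : (K:ℝ) = 2^(k+1) := by rw [hK]; push_cast; ring
  rcases lt_or_ge r (2^k) with hcase | hcase
  · have htb2 : r.testBit k = false := Nat.testBit_eq_false_of_lt hcase
    have hr1 : ((r:ℝ)+1)/(K:ℝ) ≤ 1/2 := by
      rw [div_le_iff₀ hKR, hKpow]
      have : (r:ℝ) + 1 ≤ 2^k := by exact_mod_cast hcase
      rw [pow_succ]
      linarith
    have hr0 : (0:ℝ) ≤ (r:ℝ)/(K:ℝ) := by positivity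
    rw [tent_left hr0 (by
        have : (r:ℝ)/(K:ℝ) ≤ ((r:ℝ)+1)/(K:ℝ) := by
          gcongr; linarith
        linarith),
      tent_left (by positivity) hr1, htb2]
    rw [hKpow]
    field_simp
    norm_num
  · have htb2 : r.testBit k = true := by
      rw [Nat.testBit_eq_decide_div_mod_eq]
      have : r / 2^k = 1 := Nat.div_eq_of_lt_le (by simpa using hcase) (by
        simpa [two_mul, pow_succ] using hr.trans_le (le_of_eq (by rw [hK]; ring)))
      simp [this]
    have h2k : ((2:ℝ)^k) ≤ r := by exact_mod_cast hcase
    have hrK : (r:ℝ) + 1 ≤ (K:ℝ) := by exact_mod_cast hr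
    have half : (1/2 : ℝ) ≤ (r:ℝ)/(K:ℝ) := by
      rw [le_div_iff₀ hKR, hKpow, pow_succ]
      linarith
    rw [tent_right half (by rw [div_le_one hKR]; linarith),
      tent_right (by
        have : (r:ℝ)/(K:ℝ) ≤ ((r:ℝ)+1)/(K:ℝ) := by
          gcongr; linarith
        linarith) (by rw [div_le_one hKR]; linarith), htb2]
    rw [hKpow]
    field_simp
    norm_num

/-- truncated sum for sWeight -/
lemma sWeight_eq (p : ℝ) (m n : ℕ) (h : m < 2^n) :
    sWeight p m = ∑ j ∈ Finset.range n, if m.testBit j then (2:ℝ) ^ (p * (j:ℝ)) else 0 := by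
  unfold sWeight
  have key : ∀ N : ℕ, m ≤ N → n ≤ N →
      (∑ j ∈ Finset.range N, if m.testBit j then (2:ℝ) ^ (p * (j:ℝ)) else 0)
        = ∑ j ∈ Finset.range n, if m.testBit j then (2:ℝ) ^ (p * (j:ℝ)) else 0 := by
    intro N hm hn
    apply (Finset.sum_subset (Finset.range_subset_range.mpr hn) ?_).symm
    intro j _ hj
    simp only [Finset.mem_range, not_lt] at hj
    have : m.testBit j = false := Nat.testBit_eq_false_of_lt
      (lt_of_lt_of_le h (Nat.pow_le_pow_right (by norm_num) hj))
    simp [this]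
  rw [← key (m + n) (by omega) (by omega)]
  apply Finset.sum_subset (Finset.range_subset_range.mpr (by omega))
  intro j _ hj
  simp only [Finset.mem_range, not_lt] at hj
  have : m.testBit j = false := Nat.testBit_eq_false_of_lt
    (lt_of_lt_of_le (Nat.lt_two_pow_self) (Nat.pow_le_pow_right (by norm_num) hj))
  simp [this]

noncomputable def Gfun (α : ℝ) (n m : ℕ) : ℝ :=
  ∑ k ∈ Finset.range n, (2:ℝ)^(α*(k:ℝ)) * tent ((m:ℝ) / 2^(k+1))

noncomputable def cconst (α : ℝ) (n : ℕ) : ℝ := ∑ k ∈ Finset.range n, (2:ℝ)^((α-1)*(k:ℝ))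

lemma Gfun_succ (α : ℝ) (n m : ℕ) (h : m < 2^n) :
    Gfun α n (m+1) = Gfun α n m + cconst α n - 2 * sWeight (α-1) m := by
  have step : ∀ k ∈ Finset.range n,
      (2:ℝ)^(α*(k:ℝ)) * tent (((m+1:ℕ):ℝ) / 2^(k+1))
        = (2:ℝ)^(α*(k:ℝ)) * tent ((m:ℝ) / 2^(k+1))
          + ((2:ℝ)^((α-1)*(k:ℝ)) - 2 * (if m.testBit k then (2:ℝ)^((α-1)*(k:ℝ)) else 0)) := by
    intro k _
    have hd := tent_diff k m
    have hpow : (2:ℝ)^(α*(k:ℝ)) * (2/2^(k+1)) = (2:ℝ)^((α-1)*(k:ℝ)) := by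
      have e : (2:ℝ)/(2:ℝ)^((((k:ℕ)+1:ℕ)):ℝ) = (2:ℝ)^(1-(((k:ℕ)+1:ℕ):ℝ)) := by
        rw [Real.rpow_sub (by norm_num), Real.rpow_one]
      rw [← Real.rpow_natCast 2 (k+1), e, ← Real.rpow_add (by norm_num)]
      congr 1
      push_cast
      ring
    have : tent (((m+1:ℕ):ℝ) / 2^(k+1)) = tent ((m:ℝ)/2^(k+1))
        + (2/2^(k+1)) * (1 - 2 * (if m.testBit k then 1 else 0)) := by
      push_cast
      linarith [hd]
    rw [this, mul_add, ← mul_assoc, hpow]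
    by_cases hb : m.testBit k <;> simp [hb] <;> ring
  unfold Gfun
  rw [Finset.sum_congr rfl step, Finset.sum_add_distrib, Finset.sum_sub_distrib,
    sWeight_eq (α-1) m n h]
  unfold cconst
  rw [Finset.mul_sum]
  ring

lemma Gfun_eq (α : ℝ) (n m : ℕ) (h : m ≤ 2^n) :
    Gfun α n m = m * cconst α n - 2 * SWeight (α-1) m := by
  induction m with
  | zero =>
    have t0 : tent 0 = 0 := by simpa using tent_int 0
    simp [Gfun, SWeight, t0]
  | succ m ih =>
    have hm : m < 2^n := by omega
    rw [Gfun_succ α n m hm, ih (by omega)]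
    unfold SWeight
    rw [Finset.sum_range_succ]
    push_cast
    ring

lemma takagi_eval (α : ℝ) (n m : ℕ) :
    takagi α ((m:ℝ)/2^n) = ∑ j ∈ Finset.range n,
      (1 / (2:ℝ) ^ (α * (j:ℝ))) * tent ((2:ℝ) ^ (j:ℕ) * ((m:ℝ)/2^n)) := by
  unfold takagi
  apply tsum_eq_sum
  intro j hj
  simp only [Finset.mem_range, not_lt] at hj
  have : (2:ℝ) ^ (j:ℕ) * ((m:ℝ)/2^n) = ((2^(j-n)*m : ℕ) : ℤ) := by
    push_cast
    have h2 : (2:ℝ)^j = 2^(j-n) * 2^n := by rw [← pow_add]; congr 1; omega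
    rw [h2]
    field_simp
  rw [this, tent_int]
  ring

lemma scaled_takagi (α : ℝ) (n m : ℕ) :
    (2:ℝ) ^ (((n:ℝ)-1)*α) * takagi α ((m:ℝ)/2^n) = Gfun α n m := by
  rw [takagi_eval, Finset.mul_sum]
  have hG : Gfun α n m = ∑ j ∈ Finset.range n,
      (2:ℝ)^(α*((n-1-j : ℕ):ℝ)) * tent ((m:ℝ) / 2^((n-1-j)+1)) :=
    (Finset.sum_range_reflect (fun k : ℕ => (2:ℝ)^(α*(k:ℝ)) * tent ((m:ℝ) / 2^(k+1))) n).symm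
  rw [hG]
  apply Finset.sum_congr rfl
  intro j hj
  simp only [Finset.mem_range] at hj

  have h1 : ((n - 1 - j : ℕ) : ℝ) = (n:ℝ) - 1 - (j:ℝ) := by
    have : n - 1 - j = n - 1 - j := rfl
    push_cast [Nat.cast_sub (by omega : j ≤ n - 1), Nat.cast_sub (by omega : 1 ≤ n)]
    ring
  have h2 : (n - 1 - j) + 1 = n - j := by omega
  have hc : (2:ℝ) ^ (((n:ℝ)-1)*α) * (1 / (2:ℝ) ^ (α * (j:ℝ)))
      = (2:ℝ)^(α*((n - 1 - j : ℕ):ℝ)) := by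
    rw [h1, div_eq_mul_inv, one_mul, ← Real.rpow_neg (by norm_num),
      ← Real.rpow_add (by norm_num)]
    congr 1
    ring
  have ht : (2:ℝ) ^ (j:ℕ) * ((m:ℝ)/2^n) = (m:ℝ) / 2^((n - 1 - j) + 1) := by
    have hp : (2:ℝ)^j * 2^(n-j) = 2^n := by rw [← pow_add]; congr 1; omega
    rw [h2, eq_div_iff (by positivity), mul_right_comm, hp]
    field_simp
  rw [← mul_assoc, hc, ht]


theorem takagi_defect_eq_SWeight (α : ℝ) (hα : 0 < α) (n m l : ℕ)
    (hlm : l ≤ m) (hmn : m + l ≤ 2 ^ n) :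
    (2:ℝ) ^ (((n:ℝ) - 1) * α) *
        (takagi α ((m:ℝ) / 2 ^ n)
          - (1 / 2) * (takagi α (((m:ℝ) - (l:ℝ)) / 2 ^ n) + takagi α (((m:ℝ) + (l:ℝ)) / 2 ^ n)))
      = SWeight (α - 1) (m + l) + SWeight (α - 1) (m - l) - 2 * SWeight (α - 1) m := by
  have hml : ((m:ℝ) - (l:ℝ)) = (((m - l : ℕ)):ℝ) := by
    rw [Nat.cast_sub hlm]
  have hpl : ((m:ℝ) + (l:ℝ)) = (((m + l : ℕ)):ℝ) := by push_cast; ring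
  rw [hml, hpl]
  have e1 := scaled_takagi α n m
  have e2 := scaled_takagi α n (m - l)
  have e3 := scaled_takagi α n (m + l)
  rw [Gfun_eq α n m (by omega)] at e1
  rw [Gfun_eq α n (m - l) (by omega)] at e2
  rw [Gfun_eq α n (m + l) (by omega)] at e3
  have expand : (2:ℝ) ^ (((n:ℝ) - 1) * α) *
        (takagi α ((m:ℝ) / 2 ^ n)
          - (1 / 2) * (takagi α (((m - l : ℕ):ℝ) / 2 ^ n) + takagi α (((m + l : ℕ):ℝ) / 2 ^ n)))
      = (2:ℝ) ^ (((n:ℝ) - 1) * α) * takagi α ((m:ℝ) / 2 ^ n)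
        - (1/2) * ((2:ℝ) ^ (((n:ℝ) - 1) * α) * takagi α (((m - l : ℕ):ℝ) / 2 ^ n))
        - (1/2) * ((2:ℝ) ^ (((n:ℝ) - 1) * α) * takagi α (((m + l : ℕ):ℝ) / 2 ^ n)) := by
    ring
  rw [expand, e1, e2, e3, Nat.cast_sub hlm]
  push_cast
  ring
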